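/- Let F(y) = (1/√π) ∫_{−y}^{y} e^{−x²} dx. Then as n → ∞, ∫₀^{n^{−3/4}} (1 − F(y))ⁿ dy = (1 + O(n^{−5/4})) · ∫₀^{n^{−3/4}} (1 − 2y/√π)ⁿ dy; in particular ∫₀^{n^{−3/4}} (1 − F(y))ⁿ dy = √π/(2(n+1)) + O(n^{−9/4}). -/

import Mathlib

open MeasureTheory Real Filter Asymptotics

/-- The cumulative distribution function of `|Z|` where `Z` is a centered Gaussian of
variance `1/2`: `F y = (1/√π) ∫_{-y}^{y} e^{-x²} dx`. -/
noncomputable def gaussAbsCDF (y : ℝ) : ℝ :=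
  (Real.sqrt Real.pi)⁻¹ * ∫ x in (-y)..y, Real.exp (-x ^ 2)

lemma one_le_sqrtPi : 1 ≤ Real.sqrt Real.pi := by
  rw [show (1:ℝ) = Real.sqrt 1 by simp]
  exact Real.sqrt_le_sqrt (by linarith [Real.pi_gt_three])

lemma sqrtPi_pos : 0 < Real.sqrt Real.pi := lt_of_lt_of_le one_pos one_le_sqrtPi

lemma sqrtPi_le_two : Real.sqrt Real.pi ≤ 2 := by
  rw [show (2:ℝ) = Real.sqrt 4 by rw [show (4:ℝ) = 2^2 by norm_num, Real.sqrt_sq]; norm_num]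
  exact Real.sqrt_le_sqrt (by linarith [Real.pi_lt_d2])

lemma expsq_intInt (a b : ℝ) : IntervalIntegrable (fun x => Real.exp (-x^2)) volume a b :=
  (Real.continuous_exp.comp (continuous_pow 2).neg).intervalIntegrable a b

lemma gauss_continuous : Continuous gaussAbsCDF := by
  have h : ∀ y : ℝ, (∫ x in (-y)..y, Real.exp (-x ^ 2)) =
      (∫ x in (0:ℝ)..y, Real.exp (-x ^ 2)) - ∫ x in (0:ℝ)..(-y), Real.exp (-x ^ 2) := by
    intro y
    rw [eq_sub_iff_add_eq, add_comm]
    exact intervalIntegral.integral_add_adjacent_intervals (expsq_intInt _ _) (expsq_intInt _ _)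
  have hc : Continuous fun y : ℝ => ∫ x in (0:ℝ)..y, Real.exp (-x ^ 2) :=
    intervalIntegral.continuous_primitive (fun a b => expsq_intInt a b) 0
  unfold gaussAbsCDF
  simp only [h]
  exact continuous_const.mul (hc.sub (hc.comp continuous_neg))

lemma cdf_nonneg {y : ℝ} (hy : 0 ≤ y) : 0 ≤ gaussAbsCDF y := by
  apply mul_nonneg (inv_nonneg.2 sqrtPi_pos.le)
  apply intervalIntegral.integral_nonneg (by linarith)
  intro x _; positivity

lemma cdf_upper {y : ℝ} (hy : 0 ≤ y) : gaussAbsCDF y ≤ 2 * y / Real.sqrt Real.pi := by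
  have h : (∫ x in (-y)..y, Real.exp (-x ^ 2)) ≤ ∫ x in (-y)..y, (1:ℝ) := by
    apply intervalIntegral.integral_mono_on (by linarith) (expsq_intInt _ _)
      (intervalIntegrable_const)
    intro x _
    refine Real.exp_le_one_iff.2 (by nlinarith [sq_nonneg x])
  rw [intervalIntegral.integral_const, smul_eq_mul, mul_one] at h
  unfold gaussAbsCDF
  rw [div_eq_inv_mul]
  have h0 := inv_nonneg.2 sqrtPi_pos.le
  exact mul_le_mul_of_nonneg_left (by linarith) h0

lemma cdf_lower {y : ℝ} (hy : 0 ≤ y) : 2 * y / Real.sqrt Real.pi - y^3 ≤ gaussAbsCDF y := by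
  have h : (∫ x in (-y)..y, (1 - x^2 : ℝ)) ≤ ∫ x in (-y)..y, Real.exp (-x ^ 2) := by
    apply intervalIntegral.integral_mono_on (by linarith)
      ((continuous_const.sub (continuous_pow 2)).intervalIntegrable _ _) (expsq_intInt _ _)
    intro x _
    have := Real.add_one_le_exp (-x^2)
    simp only [Pi.sub_apply]
    linarith
  have hval : (∫ x in (-y)..y, (1 - x^2 : ℝ)) = 2*y - 2*y^3/3 := by
    rw [intervalIntegral.integral_sub intervalIntegrable_const
      ((continuous_pow 2).intervalIntegrable _ _)]
    rw [intervalIntegral.integral_const, integral_pow]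
    simp; ring
  rw [hval] at h
  have hs1 : 1 ≤ Real.sqrt Real.pi := one_le_sqrtPi
  have hs0 : 0 < Real.sqrt Real.pi := sqrtPi_pos
  unfold gaussAbsCDF
  rw [div_eq_inv_mul]
  have h2 : (Real.sqrt Real.pi)⁻¹ * (2*y - 2*y^3/3) ≤
      (Real.sqrt Real.pi)⁻¹ * ∫ x in (-y)..y, Real.exp (-x ^ 2) := by
    apply mul_le_mul_of_nonneg_left h (inv_nonneg.2 hs0.le)
  have h3 : (Real.sqrt Real.pi)⁻¹ * (2*y) - y^3 ≤ (Real.sqrt Real.pi)⁻¹ * (2*y - 2*y^3/3) := by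
    have hinv : (Real.sqrt Real.pi)⁻¹ ≤ 1 := by rw [inv_le_one_iff₀]; right; exact hs1
    have hinv0 : 0 ≤ (Real.sqrt Real.pi)⁻¹ := inv_nonneg.2 hs0.le
    nlinarith [pow_nonneg hy 3]
  linarith [h2, h3]

lemma J_eq (n : ℕ) (d : ℝ) :
    (∫ y in (0:ℝ)..d, (1 - 2*y/Real.sqrt Real.pi)^n)
      = (1 - (1 - 2*d/Real.sqrt Real.pi)^(n+1)) * (Real.sqrt Real.pi / (2*(n+1))) := by
  have hs0 : Real.sqrt Real.pi ≠ 0 := sqrtPi_pos.ne'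
  have hderiv : ∀ y ∈ Set.uIcc (0:ℝ) d,
      HasDerivAt (fun y : ℝ => (1 - 2*y/Real.sqrt Real.pi)^(n+1) *
        (-(Real.sqrt Real.pi / (2*(n+1))))) ((1 - 2*y/Real.sqrt Real.pi)^n) y := by
    intro y _
    have h1 : HasDerivAt (fun y : ℝ => 1 - 2*y/Real.sqrt Real.pi)
        (-(2/Real.sqrt Real.pi)) y := by
      have := (((hasDerivAt_id y).const_mul (2:ℝ)).div_const (Real.sqrt Real.pi))
      have h3 : HasDerivAt (fun y : ℝ => 2*y/Real.sqrt Real.pi) (2/Real.sqrt Real.pi) y := by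
        simpa using this
      exact h3.const_sub 1
    have h2 := (h1.pow (n+1)).mul_const (-(Real.sqrt Real.pi / (2*(n+1))))
    refine h2.congr_deriv ?_
    have hn1 : ((n:ℝ)+1) ≠ 0 := by positivity
    push_cast
    field_simp
  have := intervalIntegral.integral_eq_sub_of_hasDerivAt hderiv
    ((((continuous_const.sub ((continuous_const.mul continuous_id).div_const _)).pow n)).intervalIntegrable _ _)
  rw [this]
  simp
  ring

lemma rpow_cube {n : ℕ} : ((n:ℝ)^(-(3:ℝ)/4))^(3:ℕ) = (n:ℝ)^(-(9:ℝ)/4) := by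
  rw [← Real.rpow_natCast ((n:ℝ)^(-(3:ℝ)/4)) 3, ← Real.rpow_mul (Nat.cast_nonneg n)]
  norm_num

lemma rpow_mul_self {n : ℕ} (hn : 0 < n) : (n:ℝ) * (n:ℝ)^(-(9:ℝ)/4) = (n:ℝ)^(-(5:ℝ)/4) := by
  have h : (0:ℝ) < n := by exact_mod_cast hn
  nth_rewrite 1 [← Real.rpow_one (n:ℝ)]
  rw [← Real.rpow_add h]
  norm_num

lemma rpow_mul_self' {n : ℕ} (hn : 0 < n) : (n:ℝ) * (n:ℝ)^(-(3:ℝ)/4) = (n:ℝ)^((1:ℝ)/4) := by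
  have h : (0:ℝ) < n := by exact_mod_cast hn
  nth_rewrite 1 [← Real.rpow_one (n:ℝ)]
  rw [← Real.rpow_add h]
  norm_num

lemma rpow_prod {n : ℕ} (hn : 0 < n) : (n:ℝ)^(-(5:ℝ)/4) * ((n:ℝ))⁻¹ = (n:ℝ)^(-(9:ℝ)/4) := by
  have h : (0:ℝ) < n := by exact_mod_cast hn
  rw [← Real.rpow_neg_one (n:ℝ), ← Real.rpow_add h]
  norm_num

lemma rpow_nine {n : ℕ} : ((n:ℝ)^((1:ℝ)/4))^(9:ℕ) = (n:ℝ)^((9:ℝ)/4) := by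
  rw [← Real.rpow_natCast ((n:ℝ)^((1:ℝ)/4)) 9, ← Real.rpow_mul (Nat.cast_nonneg n)]
  norm_num

lemma delta_le {n : ℕ} (hn : 16 ≤ n) : (n:ℝ)^(-(3:ℝ)/4) ≤ 1/8 := by
  have h16 : (16:ℝ) ≤ (n:ℝ) := by exact_mod_cast hn
  have h1 : (n:ℝ)^(-(3:ℝ)/4) ≤ (16:ℝ)^(-(3:ℝ)/4) :=
    Real.rpow_le_rpow_of_nonpos (by norm_num) h16 (by norm_num)
  have h2 : (16:ℝ)^(-(3:ℝ)/4) = 1/8 := by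
    rw [show (16:ℝ) = 2^(4:ℕ) by norm_num, ← Real.rpow_natCast 2 4,
      ← Real.rpow_mul (by norm_num)]
    rw [show ((4:ℕ):ℝ) * (-(3)/4) = -(3:ℕ) by push_cast; norm_num, Real.rpow_neg (by norm_num),
      Real.rpow_natCast]
    norm_num
  linarith

lemma eps_le {n : ℕ} (hn : 16 ≤ n) : (n:ℝ)^(-(5:ℝ)/4) ≤ 1/32 := by
  have h16 : (16:ℝ) ≤ (n:ℝ) := by exact_mod_cast hn
  have h1 : (n:ℝ)^(-(5:ℝ)/4) ≤ (16:ℝ)^(-(5:ℝ)/4) :=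
    Real.rpow_le_rpow_of_nonpos (by norm_num) h16 (by norm_num)
  have h2 : (16:ℝ)^(-(5:ℝ)/4) = 1/32 := by
    rw [show (16:ℝ) = 2^(4:ℕ) by norm_num, ← Real.rpow_natCast 2 4,
      ← Real.rpow_mul (by norm_num)]
    rw [show ((4:ℕ):ℝ) * (-(5)/4) = -(5:ℕ) by push_cast; norm_num, Real.rpow_neg (by norm_num),
      Real.rpow_natCast]
    norm_num
  linarith

lemma exp_le_one_add {u : ℝ} (h0 : 0 ≤ u) (h : u ≤ 1/2) : Real.exp u ≤ 1 + 2*u := by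
  have h1 : 1 - u ≤ Real.exp (-u) := by linarith [Real.add_one_le_exp (-u)]
  have h2 : 0 < 1 - u := by linarith
  have h3 : Real.exp u = (Real.exp (-u))⁻¹ := by rw [← Real.exp_neg]; ring_nf
  rw [h3]
  have h4 : (Real.exp (-u))⁻¹ ≤ (1-u)⁻¹ := by
    apply inv_anti₀ h2 h1
  have h5 : (1-u)⁻¹ ≤ 1 + 2*u := by
    rw [inv_le_iff_one_le_mul₀ h2]
    nlinarith
  linarith

lemma pow_lb {n : ℕ} (hn : 16 ≤ n) {y : ℝ} (hy : 0 ≤ y) (hy2 : y ≤ (n:ℝ)^(-(3:ℝ)/4)) :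
    (1 - 2*y/Real.sqrt Real.pi)^n ≤ (1 - gaussAbsCDF y)^n := by
  have hy8 : y ≤ 1/8 := le_trans hy2 (delta_le hn)
  have hg : 1/2 ≤ 1 - 2*y/Real.sqrt Real.pi := by
    have : 2*y/Real.sqrt Real.pi ≤ 2*y := div_le_self (by linarith) one_le_sqrtPi
    linarith
  exact pow_le_pow_left₀ (by linarith) (by linarith [cdf_upper hy]) n

lemma pow_ub {n : ℕ} (hn : 16 ≤ n) {y : ℝ} (hy : 0 ≤ y) (hy2 : y ≤ (n:ℝ)^(-(3:ℝ)/4)) :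
    (1 - gaussAbsCDF y)^n ≤
      (1 + 4*(n:ℝ)^(-(5:ℝ)/4)) * (1 - 2*y/Real.sqrt Real.pi)^n := by
  have hy8 : y ≤ 1/8 := le_trans hy2 (delta_le hn)
  have hg : 1/2 ≤ 1 - 2*y/Real.sqrt Real.pi := by
    have : 2*y/Real.sqrt Real.pi ≤ 2*y := div_le_self (by linarith) one_le_sqrtPi
    linarith
  have ht0 : 0 ≤ (n:ℝ)^(-(9:ℝ)/4) := Real.rpow_nonneg (Nat.cast_nonneg n) _
  have hy3 : y^3 ≤ (n:ℝ)^(-(9:ℝ)/4) := by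
    rw [← rpow_cube]
    exact pow_le_pow_left₀ hy hy2 3
  have hf_ub : 1 - gaussAbsCDF y ≤
      (1 - 2*y/Real.sqrt Real.pi) * (1 + 2*(n:ℝ)^(-(9:ℝ)/4)) := by
    have h1 := cdf_lower hy
    nlinarith
  have hf_nonneg : 0 ≤ 1 - gaussAbsCDF y := by
    have h2 : 2*y/Real.sqrt Real.pi ≤ 2*y := div_le_self (by linarith) one_le_sqrtPi
    linarith [cdf_upper hy]
  calc (1 - gaussAbsCDF y)^n
      ≤ ((1 - 2*y/Real.sqrt Real.pi) * (1 + 2*(n:ℝ)^(-(9:ℝ)/4)))^n :=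
        pow_le_pow_left₀ hf_nonneg hf_ub n
    _ = (1 + 2*(n:ℝ)^(-(9:ℝ)/4))^n * (1 - 2*y/Real.sqrt Real.pi)^n := by
        rw [mul_pow]; ring
    _ ≤ Real.exp ((n:ℝ) * (2*(n:ℝ)^(-(9:ℝ)/4))) * (1 - 2*y/Real.sqrt Real.pi)^n := by
        apply mul_le_mul_of_nonneg_right _ (pow_nonneg (by linarith) n)
        rw [Real.exp_nat_mul]
        exact pow_le_pow_left₀ (by linarith)
          (by linarith [Real.add_one_le_exp (2*(n:ℝ)^(-(9:ℝ)/4))]) n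
    _ ≤ (1 + 4*(n:ℝ)^(-(5:ℝ)/4)) * (1 - 2*y/Real.sqrt Real.pi)^n := by
        apply mul_le_mul_of_nonneg_right _ (pow_nonneg (by linarith) n)
        have hnt : (n:ℝ) * (2*(n:ℝ)^(-(9:ℝ)/4)) = 2 * (n:ℝ)^(-(5:ℝ)/4) := by
          rw [show (n:ℝ)*(2*(n:ℝ)^(-(9:ℝ)/4)) = 2*((n:ℝ)*(n:ℝ)^(-(9:ℝ)/4)) by ring,
            rpow_mul_self (by omega)]
        rw [hnt]
        have := exp_le_one_add (u := 2 * (n:ℝ)^(-(5:ℝ)/4))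
          (by positivity) (by linarith [eps_le hn])
        linarith

lemma intInt_f (n : ℕ) (a b : ℝ) :
    IntervalIntegrable (fun y => (1 - gaussAbsCDF y)^n) volume a b :=
  ((continuous_const.sub gauss_continuous).pow n).intervalIntegrable a b

lemma intInt_g (n : ℕ) (a b : ℝ) :
    IntervalIntegrable (fun y => (1 - 2*y/Real.sqrt Real.pi)^n) volume a b :=
  ((continuous_const.sub ((continuous_const.mul continuous_id).div_const _)).pow
    n).intervalIntegrable a b

lemma J_le_I {n : ℕ} (hn : 16 ≤ n) :
    (∫ y in (0:ℝ)..((n:ℝ)^(-(3:ℝ)/4)), (1 - 2*y/Real.sqrt Real.pi)^n)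
      ≤ ∫ y in (0:ℝ)..((n:ℝ)^(-(3:ℝ)/4)), (1 - gaussAbsCDF y)^n := by
  apply intervalIntegral.integral_mono_on (Real.rpow_nonneg (Nat.cast_nonneg n) _)
    (intInt_g n _ _) (intInt_f n _ _)
  intro y hy
  exact pow_lb hn hy.1 hy.2

lemma I_le {n : ℕ} (hn : 16 ≤ n) :
    (∫ y in (0:ℝ)..((n:ℝ)^(-(3:ℝ)/4)), (1 - gaussAbsCDF y)^n)
      ≤ (1 + 4*(n:ℝ)^(-(5:ℝ)/4)) *
        ∫ y in (0:ℝ)..((n:ℝ)^(-(3:ℝ)/4)), (1 - 2*y/Real.sqrt Real.pi)^n := by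
  rw [← intervalIntegral.integral_const_mul]
  apply intervalIntegral.integral_mono_on (Real.rpow_nonneg (Nat.cast_nonneg n) _)
    (intInt_f n _ _) ((intInt_g n _ _).const_mul _)
  intro y hy
  exact pow_ub hn hy.1 hy.2

lemma base_bounds {n : ℕ} (hn : 16 ≤ n) :
    0 ≤ 1 - 2*((n:ℝ)^(-(3:ℝ)/4))/Real.sqrt Real.pi ∧
      1 - 2*((n:ℝ)^(-(3:ℝ)/4))/Real.sqrt Real.pi < 1 := by
  have hd0 : 0 < (n:ℝ)^(-(3:ℝ)/4) :=
    Real.rpow_pos_of_pos (by exact_mod_cast (by omega : 0 < n)) _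
  have hd8 : (n:ℝ)^(-(3:ℝ)/4) ≤ 1/8 := delta_le hn
  have h1 : 2*((n:ℝ)^(-(3:ℝ)/4))/Real.sqrt Real.pi ≤ 2*((n:ℝ)^(-(3:ℝ)/4)) :=
    div_le_self (by linarith) one_le_sqrtPi
  have h2 : 0 < 2*((n:ℝ)^(-(3:ℝ)/4))/Real.sqrt Real.pi := by positivity
  constructor <;> linarith

lemma J_pos {n : ℕ} (hn : 16 ≤ n) :
    0 < ∫ y in (0:ℝ)..((n:ℝ)^(-(3:ℝ)/4)), (1 - 2*y/Real.sqrt Real.pi)^n := by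
  rw [J_eq]
  obtain ⟨hb0, hb1⟩ := base_bounds hn
  have hp : (1 - 2*((n:ℝ)^(-(3:ℝ)/4))/Real.sqrt Real.pi)^(n+1) < 1 :=
    pow_lt_one₀ hb0 hb1 (by omega)
  have : (0:ℝ) < Real.sqrt Real.pi / (2*((n:ℝ)+1)) := by
    apply div_pos sqrtPi_pos; positivity
  push_cast
  nlinarith

lemma J_ub {n : ℕ} (hn : 16 ≤ n) :
    (∫ y in (0:ℝ)..((n:ℝ)^(-(3:ℝ)/4)), (1 - 2*y/Real.sqrt Real.pi)^n)
      ≤ Real.sqrt Real.pi / (2*((n:ℝ)+1)) := by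
  rw [J_eq]
  obtain ⟨hb0, _⟩ := base_bounds hn
  have hp : 0 ≤ (1 - 2*((n:ℝ)^(-(3:ℝ)/4))/Real.sqrt Real.pi)^(n+1) := pow_nonneg hb0 _
  have h2 : (0:ℝ) < Real.sqrt Real.pi / (2*((n:ℝ)+1)) := by
    apply div_pos sqrtPi_pos; positivity
  push_cast
  nlinarith

lemma exp_neg_le {x : ℝ} (hx : 0 < x) : Real.exp (-x) ≤ 362880 / x^(9:ℕ) := by
  have h1 : x^(9:ℕ)/362880 ≤ Real.exp x := by
    have h2 : x^(9:ℕ)/(Nat.factorial 9 : ℝ) ≤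
        ∑ i ∈ Finset.range 10, x^i/(Nat.factorial i : ℝ) := by
      apply Finset.single_le_sum (f := fun i => x^i/(Nat.factorial i : ℝ))
        (fun i _ => by positivity) (by norm_num : (9:ℕ) ∈ Finset.range 10)
    calc x^(9:ℕ)/362880 = x^(9:ℕ)/(Nat.factorial 9 : ℝ) := by norm_num [Nat.factorial]
      _ ≤ _ := h2
      _ ≤ Real.exp x := Real.sum_le_exp_of_nonneg hx.le 10
  rw [Real.exp_neg]
  rw [inv_le_iff_one_le_mul₀ (Real.exp_pos x)]
  have hx9 : 0 < x^(9:ℕ) := by positivity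
  rw [div_mul_eq_mul_div, le_div_iff₀ hx9]
  nlinarith

lemma J_err {n : ℕ} (hn : 16 ≤ n) :
    Real.sqrt Real.pi / (2*((n:ℝ)+1)) -
      (∫ y in (0:ℝ)..((n:ℝ)^(-(3:ℝ)/4)), (1 - 2*y/Real.sqrt Real.pi)^n)
      ≤ 362880 * (n:ℝ)^(-(9:ℝ)/4) := by
  rw [J_eq]
  obtain ⟨hb0, _⟩ := base_bounds hn
  have hnpos : (0:ℝ) < n := by exact_mod_cast (by omega : 0 < n)
  have hd0 : 0 < (n:ℝ)^(-(3:ℝ)/4) := Real.rpow_pos_of_pos hnpos _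
  have hfac : (0:ℝ) < Real.sqrt Real.pi / (2*((n:ℝ)+1)) := by
    apply div_pos sqrtPi_pos; positivity
  have hfac1 : Real.sqrt Real.pi / (2*((n:ℝ)+1)) ≤ 1 := by
    rw [div_le_one (by positivity)]
    linarith [sqrtPi_le_two]
  have key : (1 - 2*((n:ℝ)^(-(3:ℝ)/4))/Real.sqrt Real.pi)^(n+1)
      ≤ 362880 * (n:ℝ)^(-(9:ℝ)/4) := by
    have hq : 2*((n:ℝ)^(-(3:ℝ)/4))/Real.sqrt Real.pi ≥ (n:ℝ)^(-(3:ℝ)/4) := by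
      rw [ge_iff_le, le_div_iff₀ sqrtPi_pos]
      nlinarith [sqrtPi_le_two]
    have h1 : (1 - 2*((n:ℝ)^(-(3:ℝ)/4))/Real.sqrt Real.pi)^(n+1)
        ≤ Real.exp (-(2*((n:ℝ)^(-(3:ℝ)/4))/Real.sqrt Real.pi))^(n+1) := by
      apply pow_le_pow_left₀ hb0
      linarith [Real.add_one_le_exp (-(2*((n:ℝ)^(-(3:ℝ)/4))/Real.sqrt Real.pi))]
    have h2 : Real.exp (-(2*((n:ℝ)^(-(3:ℝ)/4))/Real.sqrt Real.pi))^(n+1)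
        = Real.exp (-(((n:ℕ):ℝ)+1) * (2*((n:ℝ)^(-(3:ℝ)/4))/Real.sqrt Real.pi)) := by
      rw [← Real.exp_nat_mul]
      push_cast
      ring_nf
    have h3 : ((n:ℝ)+1) * (2*((n:ℝ)^(-(3:ℝ)/4))/Real.sqrt Real.pi) ≥ (n:ℝ)^((1:ℝ)/4) := by
      have := rpow_mul_self' (n := n) (by omega)
      nlinarith [Real.rpow_nonneg (Nat.cast_nonneg n) (-(3:ℝ)/4)]
    have h4 : Real.exp (-(((n:ℝ)+1) * (2*((n:ℝ)^(-(3:ℝ)/4))/Real.sqrt Real.pi)))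
        ≤ Real.exp (-(n:ℝ)^((1:ℝ)/4)) := by
      apply Real.exp_le_exp.2
      linarith
    have h5 : Real.exp (-(n:ℝ)^((1:ℝ)/4)) ≤ 362880 / ((n:ℝ)^((1:ℝ)/4))^(9:ℕ) :=
      exp_neg_le (Real.rpow_pos_of_pos hnpos _)
    have h6 : (362880:ℝ) / ((n:ℝ)^((1:ℝ)/4))^(9:ℕ) = 362880 * (n:ℝ)^(-(9:ℝ)/4) := by
      rw [rpow_nine, div_eq_mul_inv, ← Real.rpow_neg (Nat.cast_nonneg n)]
      norm_num
    calc (1 - 2*((n:ℝ)^(-(3:ℝ)/4))/Real.sqrt Real.pi)^(n+1)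
        ≤ _ := h1
      _ = _ := h2
      _ ≤ Real.exp (-(n:ℝ)^((1:ℝ)/4)) := by rw [neg_mul]; exact h4
      _ ≤ 362880 / ((n:ℝ)^((1:ℝ)/4))^(9:ℕ) := h5
      _ = 362880 * (n:ℝ)^(-(9:ℝ)/4) := h6
  push_cast
  nlinarith [pow_nonneg hb0 (n+1)]

/-- **The near-zero integral:** as `n → ∞`,
`∫₀^{n^{-3/4}} (1 - F y)ⁿ dy = (1 + O(n^{-5/4})) · ∫₀^{n^{-3/4}} (1 - 2y/√π)ⁿ dy`, and in
particular `∫₀^{n^{-3/4}} (1 - F y)ⁿ dy = √π/(2(n+1)) + O(n^{-9/4})`. -/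
theorem near_zero_integral_asymptotic :
    (∃ e : ℕ → ℝ, (e =O[atTop] fun n : ℕ => (n : ℝ) ^ (-(5 : ℝ) / 4)) ∧
      ∀ᶠ n : ℕ in atTop,
        (∫ y in (0 : ℝ)..((n : ℝ) ^ (-(3 : ℝ) / 4)), (1 - gaussAbsCDF y) ^ n) =
          (1 + e n) *
            ∫ y in (0 : ℝ)..((n : ℝ) ^ (-(3 : ℝ) / 4)),
              (1 - 2 * y / Real.sqrt Real.pi) ^ n) ∧
    (fun n : ℕ =>
        (∫ y in (0 : ℝ)..((n : ℝ) ^ (-(3 : ℝ) / 4)), (1 - gaussAbsCDF y) ^ n) -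
          Real.sqrt Real.pi / (2 * (n + 1))) =O[atTop]
      fun n : ℕ => (n : ℝ) ^ (-(9 : ℝ) / 4) := by
  constructor
  · refine ⟨fun n => (∫ y in (0:ℝ)..((n:ℝ)^(-(3:ℝ)/4)), (1 - gaussAbsCDF y)^n) /
      (∫ y in (0:ℝ)..((n:ℝ)^(-(3:ℝ)/4)), (1 - 2*y/Real.sqrt Real.pi)^n) - 1, ?_, ?_⟩
    · rw [isBigO_iff]
      refine ⟨4, ?_⟩
      filter_upwards [eventually_ge_atTop 16] with n hn
      set I := ∫ y in (0:ℝ)..((n:ℝ)^(-(3:ℝ)/4)), (1 - gaussAbsCDF y)^n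
      set J := ∫ y in (0:ℝ)..((n:ℝ)^(-(3:ℝ)/4)), (1 - 2*y/Real.sqrt Real.pi)^n
      have hJ : 0 < J := J_pos hn
      have h1 : J ≤ I := J_le_I hn
      have h2 : I ≤ (1 + 4*(n:ℝ)^(-(5:ℝ)/4)) * J := I_le hn
      have he0 : 0 ≤ I / J - 1 := by
        rw [sub_nonneg, le_div_iff₀ hJ, one_mul]; exact h1
      have he1 : I / J - 1 ≤ 4*(n:ℝ)^(-(5:ℝ)/4) := by
        rw [sub_le_iff_le_add, div_le_iff₀ hJ]
        calc I ≤ (1 + 4*(n:ℝ)^(-(5:ℝ)/4)) * J := h2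
          _ = (4*(n:ℝ)^(-(5:ℝ)/4) + 1) * J := by ring
      have hε : 0 ≤ (n:ℝ)^(-(5:ℝ)/4) := Real.rpow_nonneg (Nat.cast_nonneg n) _
      rw [Real.norm_eq_abs, Real.norm_eq_abs, abs_of_nonneg he0, abs_of_nonneg hε]
      linarith
    · filter_upwards [eventually_ge_atTop 16] with n hn
      set I := ∫ y in (0:ℝ)..((n:ℝ)^(-(3:ℝ)/4)), (1 - gaussAbsCDF y)^n
      set J := ∫ y in (0:ℝ)..((n:ℝ)^(-(3:ℝ)/4)), (1 - 2*y/Real.sqrt Real.pi)^n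
      have hJ : 0 < J := J_pos hn
      have : (1 + (I / J - 1)) = I / J := by ring
      rw [this, div_mul_cancel₀ _ hJ.ne']
  · rw [isBigO_iff]
    refine ⟨362884, ?_⟩
    filter_upwards [eventually_ge_atTop 16] with n hn
    set I := ∫ y in (0:ℝ)..((n:ℝ)^(-(3:ℝ)/4)), (1 - gaussAbsCDF y)^n
    set J := ∫ y in (0:ℝ)..((n:ℝ)^(-(3:ℝ)/4)), (1 - 2*y/Real.sqrt Real.pi)^n
    have hnpos : (0:ℝ) < n := by exact_mod_cast (by omega : 0 < n)
    have hJ : 0 < J := J_pos hn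
    have h1 : J ≤ I := J_le_I hn
    have h2 : I ≤ (1 + 4*(n:ℝ)^(-(5:ℝ)/4)) * J := I_le hn
    have h3 : J ≤ Real.sqrt Real.pi / (2*((n:ℝ)+1)) := J_ub hn
    have h4 : Real.sqrt Real.pi / (2*((n:ℝ)+1)) - J ≤ 362880 * (n:ℝ)^(-(9:ℝ)/4) :=
      J_err hn
    have hq : Real.sqrt Real.pi / (2*((n:ℝ)+1)) ≤ (n:ℝ)⁻¹ := by
      rw [div_le_iff₀ (by positivity)]
      rw [inv_mul_eq_div, le_div_iff₀ hnpos]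
      nlinarith [sqrtPi_le_two]
    have hε : 0 ≤ (n:ℝ)^(-(5:ℝ)/4) := Real.rpow_nonneg (Nat.cast_nonneg n) _
    have hεn : (n:ℝ)^(-(5:ℝ)/4) * (n:ℝ)⁻¹ = (n:ℝ)^(-(9:ℝ)/4) := rpow_prod (by omega)
    have h9 : 0 ≤ (n:ℝ)^(-(9:ℝ)/4) := Real.rpow_nonneg (Nat.cast_nonneg n) _
    have hIJ : I - J ≤ 4 * (n:ℝ)^(-(9:ℝ)/4) := by
      have : I - J ≤ 4*(n:ℝ)^(-(5:ℝ)/4) * J := by nlinarith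
      have hJn : J ≤ (n:ℝ)⁻¹ := le_trans h3 hq
      nlinarith
    rw [Real.norm_eq_abs, Real.norm_eq_abs, abs_of_nonneg h9]
    rw [abs_le]
    constructor
    · push_cast
      nlinarith
    · push_cast
      nlinarith
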